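/- Let γ be a connected ordered graph on vertex set [n] with edge list E (self-edges allowed), and let E_1 be the non-self edges. Then there exist edges f_1, ..., f_{n-1} ∈ E_1 and a labeling of the vertices [n] = {v_0, ..., v_{n-1}} such that for every ℓ ∈ {1,...,n-1}: (1) f_ℓ is a step on the ordered walk w_{v_ℓ}, and (2) there exists j < ℓ such that f_ℓ is also a step on the walk w_{v_j}. -/

import Mathlib

def walkAux {n : ℕ} : List (Sym2 (Fin n)) → Fin n → ℕ → List (ℕ × Fin n × Fin n)
  | [], _, _ => []
  | e :: rest, v, p =>
    if h : v ∈ e then (p, v, Sym2.Mem.other' h) :: walkAux rest (Sym2.Mem.other' h) (p + 1)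
    else walkAux rest v (p + 1)

def walkSteps {n : ℕ} (E : List (Sym2 (Fin n))) (v : Fin n) : List (ℕ × Fin n × Fin n) :=
  walkAux E v 0

/-- one move of the walk -/
def moveW {n : ℕ} (e : Sym2 (Fin n)) (v : Fin n) : Fin n :=
  if h : v ∈ e then Sym2.Mem.other' h else v

lemma moveW_invol {n : ℕ} (e : Sym2 (Fin n)) (v : Fin n) : moveW e (moveW e v) = v := by
  unfold moveW
  split
  · rename_i h
    split
    · rename_i h2
      exact Sym2.other_invol' h h2
    · rename_i h2
      exact absurd (Sym2.other_mem' h) h2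
  · simp

lemma moveW_inj {n : ℕ} (e : Sym2 (Fin n)) : Function.Injective (moveW e) :=
  Function.LeftInverse.injective (moveW_invol e)

/-- state after processing all edges of E -/
def stateW {n : ℕ} (E : List (Sym2 (Fin n))) (v : Fin n) : Fin n :=
  E.foldl (fun w e => moveW e w) v

lemma stateW_nil {n : ℕ} (v : Fin n) : stateW [] v = v := rfl

lemma stateW_cons {n : ℕ} (e : Sym2 (Fin n)) (E : List (Sym2 (Fin n))) (v : Fin n) :
    stateW (e :: E) v = stateW E (moveW e v) := rfl

lemma stateW_inj {n : ℕ} (E : List (Sym2 (Fin n))) : Function.Injective (stateW E) := by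
  induction E with
  | nil => exact fun a b h => h
  | cons e E ih =>
    intro a b h
    rw [stateW_cons, stateW_cons] at h
    exact moveW_inj e (ih h)

lemma stateW_surj {n : ℕ} (E : List (Sym2 (Fin n))) : Function.Surjective (stateW E) :=
  Finite.surjective_of_injective (stateW_inj E)

lemma mem_walkAux {n : ℕ} (E : List (Sym2 (Fin n))) (v : Fin n) (p0 : ℕ) (k : ℕ)
    (hk : k < E.length) (h : stateW (E.take k) v ∈ E.get ⟨k, hk⟩) :
    (p0 + k, stateW (E.take k) v, moveW (E.get ⟨k, hk⟩) (stateW (E.take k) v))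
      ∈ walkAux E v p0 := by
  induction E generalizing v p0 k with
  | nil => simp at hk
  | cons e E ih =>
    cases k with
    | zero =>
      simp only [List.take_zero, stateW_nil, List.get] at h ⊢
      unfold walkAux
      rw [dif_pos h]
      have hm : moveW e v = Sym2.Mem.other' h := by simp [moveW, h]
      rw [Nat.add_zero, hm]
      exact List.mem_cons_self
    | succ k =>
      simp only [List.take_succ_cons, stateW_cons, List.get] at h ⊢
      unfold walkAux
      have hk' : k < E.length := by simpa using hk
      have := ih (moveW e v) (p0 + 1) k hk' h
      have harith : p0 + (k + 1) = (p0 + 1) + k := by omega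
      split
      · rename_i hv
        right
        have hm : moveW e v = Sym2.Mem.other' hv := by simp [moveW, hv]
        have H := ih (moveW e v) (p0+1) k hk' h
        rw [harith, hm]
        rw [hm] at H
        exact H
      · rename_i hv
        have hm : moveW e v = v := by simp [moveW, hv]
        have H := ih (moveW e v) (p0+1) k hk' h
        rw [harith, hm]
        rw [hm] at H
        exact H

/-- two vertices share a (non-self) step at position p -/
def AdjW {n : ℕ} (E : List (Sym2 (Fin n))) (u v : Fin n) : Prop :=
  ∃ p, ∃ hp : p < E.length,
    stateW (E.take p) u ∈ E.get ⟨p, hp⟩ ∧ stateW (E.take p) v ∈ E.get ⟨p, hp⟩ ∧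
    stateW (E.take p) u ≠ stateW (E.take p) v

lemma AdjW_symm {n : ℕ} (E : List (Sym2 (Fin n))) : Symmetric (AdjW E) := by
  rintro u v ⟨p, hp, h1, h2, h3⟩
  exact ⟨p, hp, h2, h1, h3.symm⟩

lemma stateW_take_succ {n : ℕ} (E : List (Sym2 (Fin n))) (p : ℕ) (hp : p < E.length)
    (v : Fin n) :
    stateW (E.take (p + 1)) v = moveW (E.get ⟨p, hp⟩) (stateW (E.take p) v) := by
  rw [List.take_succ]
  have : E[p]? = some (E.get ⟨p, hp⟩) := by
    rw [List.getElem?_eq_getElem hp]; rfl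
  rw [this]
  simp only [Option.toList_some]
  unfold stateW
  rw [List.foldl_append]
  rfl

lemma reaches_state {n : ℕ} (E : List (Sym2 (Fin n))) (p : ℕ) : ∀ x : Fin n,
    Relation.ReflTransGen (AdjW E) x (stateW (E.take p) x) := by
  induction p with
  | zero => exact fun x => Relation.ReflTransGen.refl
  | succ p ih =>
    intro x
    by_cases hp : p < E.length
    · rw [stateW_take_succ E p hp]
      set e := E.get ⟨p, hp⟩ with he
      set s := stateW (E.take p) x with hs
      by_cases hmv : moveW e s = s
      · rw [hmv]; exact ih x
      · have hse : s ∈ e := by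
          by_contra hne
          exact hmv (by simp [moveW, hne])
        have hte : moveW e s ∈ e := by
          simp only [moveW, dif_pos hse]
          exact Sym2.other_mem' hse
        obtain ⟨z, hz⟩ := stateW_surj (E.take p) (moveW e s)
        have hadj : AdjW E x z := ⟨p, hp, by rw [← hs]; exact hse, by rw [hz]; exact hte,
          by rw [hz, ← hs]; exact fun h => hmv h.symm⟩
        have := ih z
        rw [hz] at this
        exact ((Relation.ReflTransGen.single hadj).trans this)
    · have heq : E.take (p + 1) = E.take p := by
        rw [List.take_of_length_le (by omega), List.take_of_length_le (le_of_not_gt hp)]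
      rw [heq]
      exact ih x

lemma adjW_connected {n : ℕ} (E : List (Sym2 (Fin n)))
    (hconn : ∀ a b : Fin n,
      Relation.ReflTransGen (fun x y => ∃ e ∈ E, x ∈ e ∧ y ∈ e) a b) (a b : Fin n) :
    Relation.ReflTransGen (AdjW E) a b := by
  have key : ∀ x y : Fin n, (∃ e ∈ E, x ∈ e ∧ y ∈ e) →
      Relation.ReflTransGen (AdjW E) x y := by
    rintro x y ⟨e, heE, hx, hy⟩
    by_cases hxy : x = y
    · rw [hxy]
    · obtain ⟨p, hpe⟩ := List.mem_iff_get.mp heE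
      obtain ⟨u, hu⟩ := stateW_surj (E.take p) x
      obtain ⟨v, hv⟩ := stateW_surj (E.take p) y
      have hadj : AdjW E u v := ⟨p, p.isLt, by rw [hu, hpe]; exact hx,
        by rw [hv, hpe]; exact hy, by rw [hu, hv]; exact hxy⟩
      have h1 : Relation.ReflTransGen (AdjW E) u x := by
        have := reaches_state E p u; rwa [hu] at this
      have h2 : Relation.ReflTransGen (AdjW E) v y := by
        have := reaches_state E p v; rwa [hv] at this
      have hsymm : ∀ {a b}, Relation.ReflTransGen (AdjW E) a b → Relation.ReflTransGen (AdjW E) b a :=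
        fun h => by
          haveI : Std.Symm (AdjW E) := ⟨fun a b h => AdjW_symm E h⟩
          exact Std.Symm.symm (r := Relation.ReflTransGen (AdjW E)) _ _ h
      exact (hsymm h1).trans ((Relation.ReflTransGen.single hadj).trans h2)
  have := hconn a b
  induction this with
  | refl => exact Relation.ReflTransGen.refl
  | tail _ hstep ih => exact ih.trans (key _ _ hstep)

lemma two_mem_spec {α : Type*} [DecidableEq α] {e : Sym2 α} {x y : α}
    (hx : x ∈ e) (hy : y ∈ e) (hxy : x ≠ y) :
    ¬ e.IsDiag ∧ ∀ z ∈ e, z = x ∨ z = y := by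
  have hspec := Sym2.other_spec' hx
  have hy' : y ∈ Sym2.mk x (Sym2.Mem.other' hx) := by rw [hspec]; exact hy
  rw [Sym2.mem_iff] at hy'
  have hyo : y = Sym2.Mem.other' hx := by
    rcases hy' with h | h
    · exact absurd h.symm hxy
    · exact h
  have he : e = Sym2.mk x y := by rw [hyo, hspec]
  constructor
  · rw [he, Sym2.mk_isDiag_iff]
    exact hxy
  · intro z hz
    rw [he, Sym2.mem_iff] at hz
    exact hz

lemma cross_edge {n : ℕ} (E : List (Sym2 (Fin n))) (S : Finset (Fin n))
    {a b : Fin n} (h : Relation.ReflTransGen (AdjW E) a b)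
    (ha : a ∈ S) (hb : b ∉ S) :
    ∃ u ∈ S, ∃ w, w ∉ S ∧ AdjW E u w := by
  induction h with
  | refl => exact absurd ha hb
  | @tail c d h1 h2 ih =>
    by_cases hc : c ∈ S
    · exact ⟨c, hc, d, hb, h2⟩
    · exact ih hc

lemma exists_enum {n : ℕ} (hn : 0 < n) (E : List (Sym2 (Fin n)))
    (hconn : ∀ a b : Fin n,
      Relation.ReflTransGen (fun x y => ∃ e ∈ E, x ∈ e ∧ y ∈ e) a b) :
    ∀ k, k ≤ n → ∃ L : List (Fin n), L.length = k ∧ L.Nodup ∧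
      ∀ i (hi : i < L.length), 0 < i →
        ∃ j, ∃ hj : j < i, AdjW E (L[i]'hi) (L[j]'(lt_trans hj hi)) := by
  intro k
  induction k with
  | zero => exact fun _ => ⟨[], rfl, List.nodup_nil, fun i hi => by simp at hi⟩
  | succ k ih =>
    intro hk1
    obtain ⟨L, hlen, hnodup, hP⟩ := ih (by omega)
    by_cases hk0 : k = 0
    · refine ⟨[⟨0, hn⟩], by simp [hk0], List.nodup_singleton _, ?_⟩
      intro i hi hpos
      simp only [List.length_singleton] at hi
      omega
    · have hLne : L ≠ [] := by
        intro h; rw [h] at hlen; simp at hlen; omega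
      have hcard : L.toFinset.card = k := by
        rw [List.toFinset_card_of_nodup hnodup, hlen]
      obtain ⟨b, hb⟩ : ∃ b, b ∉ L.toFinset := by
        by_contra h
        push_neg at h
        have : L.toFinset = Finset.univ := Finset.eq_univ_iff_forall.mpr h
        rw [this, Finset.card_univ, Fintype.card_fin] at hcard
        omega
      have haS : L.head hLne ∈ L.toFinset := List.mem_toFinset.mpr (List.head_mem hLne)
      obtain ⟨u, huS, w, hwS, hadj⟩ :=
        cross_edge E L.toFinset (adjW_connected E hconn (L.head hLne) b) haS hb
      have hwL : w ∉ L := fun h => hwS (List.mem_toFinset.mpr h)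
      refine ⟨L ++ [w], by simp [hlen], ?_, ?_⟩
      · rw [List.nodup_append]
        exact ⟨hnodup, List.nodup_singleton _, by simp; exact fun a ha h => hwL (h ▸ ha)⟩
      · intro i hi hpos
        simp only [List.length_append, List.length_singleton, hlen] at hi
        by_cases hik : i < k
        · obtain ⟨j, hj, hadj'⟩ := hP i (by omega) hpos
          refine ⟨j, hj, ?_⟩
          rw [List.getElem_append_left (by omega), List.getElem_append_left (by omega)]
          exact hadj'
        · have hik' : i = k := by omega
          obtain ⟨j, hjlen, hju⟩ := List.mem_iff_getElem.mp (List.mem_toFinset.mp huS)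
          refine ⟨j, by omega, ?_⟩
          have h1 : (L ++ [w])[i]'(by simp [hlen]; omega) = w := by
            subst hik'
            rw [List.getElem_append_right (by omega)]
            simp [hlen]
          have h2 : (L ++ [w])[j]'(by simp [hlen]; omega) = u := by
            rw [List.getElem_append_left (by omega)]
            exact hju
          rw [h1, h2]
          exact AdjW_symm E hadj

set_option maxHeartbeats 1000000 in
/-- For a connected ordered graph on `[n]` (self-edges allowed), there exist
non-self edges `f_1, …, f_{n-1}` (given by their positions in the edge list)
and a labeling `v_0, …, v_{n-1}` of the vertices such that, for each
`ℓ ∈ {1, …, n-1}`, the edge `f_ℓ` is a step on the ordered edge walk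
`w_{v_ℓ}` and also a step on some walk `w_{v_j}` with `j < ℓ`. -/
theorem connected_spanning_edge_choice {n : ℕ} (hn : 0 < n) (E : List (Sym2 (Fin n)))
    (hconn : ∀ a b : Fin n,
      Relation.ReflTransGen (fun x y => ∃ e ∈ E, x ∈ e ∧ y ∈ e) a b) :
    ∃ (f : Fin (n - 1) → ℕ) (v : Fin n → Fin n),
      Function.Injective f ∧ Function.Bijective v ∧
      ∀ ℓ : Fin (n - 1),
        (∃ h : f ℓ < E.length, ¬ (E.get ⟨f ℓ, h⟩).IsDiag) ∧
        (∃ a b : Fin n,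
          (f ℓ, a, b) ∈ walkSteps E (v ⟨(ℓ : ℕ) + 1, by have := ℓ.isLt; omega⟩)) ∧
        (∃ j : ℕ, j < (ℓ : ℕ) + 1 ∧ ∃ (hj : j < n) (a b : Fin n),
          (f ℓ, a, b) ∈ walkSteps E (v ⟨j, hj⟩)) := by
  obtain ⟨L, hlen, hnodup, hP⟩ := exists_enum hn E hconn n le_rfl
  have hvlt : ∀ i : Fin n, (i : ℕ) < L.length := by
    intro i; rw [hlen]; exact i.isLt
  set v : Fin n → Fin n := fun i => L[(i : ℕ)]'(hvlt i) with hv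
  have hvinj : Function.Injective v := by
    intro i j h
    have := List.nodup_iff_injective_get.mp hnodup (a₁ := ⟨i, hvlt i⟩) (a₂ := ⟨j, hvlt j⟩)
    simp only [List.get_eq_getElem] at this
    have h2 := this h
    rw [Fin.mk.injEq] at h2
    exact Fin.ext h2
  have hEx : ∀ ℓ : Fin (n - 1), ∃ p, ∃ hp : p < E.length, ∃ j, j < (ℓ : ℕ) + 1 ∧
      ∃ hjn : j < n,
      stateW (E.take p) (v ⟨(ℓ : ℕ) + 1, by have := ℓ.isLt; omega⟩) ∈ E.get ⟨p, hp⟩ ∧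
      stateW (E.take p) (v ⟨j, hjn⟩) ∈ E.get ⟨p, hp⟩ ∧
      stateW (E.take p) (v ⟨(ℓ : ℕ) + 1, by have := ℓ.isLt; omega⟩) ≠
        stateW (E.take p) (v ⟨j, hjn⟩) := by
    intro ℓ
    have hℓ := ℓ.isLt
    have hi : (ℓ : ℕ) + 1 < L.length := by rw [hlen]; omega
    obtain ⟨j, hj, hadj⟩ := hP ((ℓ : ℕ) + 1) hi (by omega)
    obtain ⟨p, hp, h1, h2, h3⟩ := hadj
    exact ⟨p, hp, j, hj, by omega, h1, h2, h3⟩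
  set f : Fin (n - 1) → ℕ := fun ℓ => (hEx ℓ).choose with hf
  have hfspec : ∀ ℓ, ∃ hp : f ℓ < E.length, ∃ j, j < (ℓ : ℕ) + 1 ∧
      ∃ hjn : j < n,
      stateW (E.take (f ℓ)) (v ⟨(ℓ : ℕ) + 1, by have := ℓ.isLt; omega⟩) ∈ E.get ⟨f ℓ, hp⟩ ∧
      stateW (E.take (f ℓ)) (v ⟨j, hjn⟩) ∈ E.get ⟨f ℓ, hp⟩ ∧
      stateW (E.take (f ℓ)) (v ⟨(ℓ : ℕ) + 1, by have := ℓ.isLt; omega⟩) ≠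
        stateW (E.take (f ℓ)) (v ⟨j, hjn⟩) := fun ℓ => (hEx ℓ).choose_spec
  refine ⟨f, v, ?_, ⟨hvinj, Finite.surjective_of_injective hvinj⟩, ?_⟩
  · -- injectivity of f
    intro ℓ ℓ' heq
    obtain ⟨hp, j, hjl, hjn, hA, hB, hAB⟩ := hfspec ℓ
    obtain ⟨hp', j', hjl', hjn', hC, hD, hCD⟩ := hfspec ℓ'
    have htake : E.take (f ℓ') = E.take (f ℓ) := by rw [heq]
    have hget : E.get ⟨f ℓ', hp'⟩ = E.get ⟨f ℓ, hp⟩ := by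
      congr 1
      exact Fin.ext heq.symm
    rw [htake, hget] at hC hD
    rw [htake] at hCD
    have hmem := (two_mem_spec hA hB hAB).2
    have hsinj := stateW_inj (E.take (f ℓ))
    have hC' := hmem _ hC
    have hD' := hmem _ hD
    rcases hC' with hC1 | hC1 <;> rcases hD' with hD1 | hD1
    · exact absurd (hC1.trans hD1.symm) hCD
    · have h1 := hvinj (hsinj hC1)
      rw [Fin.mk.injEq] at h1
      exact Fin.ext (by omega)
    · have h1 := hvinj (hsinj hC1)
      have h2 := hvinj (hsinj hD1)
      rw [Fin.mk.injEq] at h1 h2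
      omega
    · exact absurd (hC1.trans hD1.symm) hCD
  · intro ℓ
    obtain ⟨hp, j, hjl, hjn, hA, hB, hAB⟩ := hfspec ℓ
    refine ⟨⟨hp, (two_mem_spec hA hB hAB).1⟩, ?_, ?_⟩
    · have hm := mem_walkAux E (v ⟨(ℓ : ℕ) + 1, by have := ℓ.isLt; omega⟩) 0 (f ℓ) hp hA
      rw [Nat.zero_add] at hm
      exact ⟨_, _, hm⟩
    · have hm := mem_walkAux E (v ⟨j, hjn⟩) 0 (f ℓ) hp hB
      rw [Nat.zero_add] at hm
      exact ⟨j, hjl, hjn, _, _, hm⟩
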